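/- If the minimum over the probability simplex of ‖Σ_m γ_m g_m‖² is attained at γ* with d := Σ_m γ*_m g_m ≠ 0, then −d is a common descent direction: ⟨g_m, d⟩ ≥ ‖d‖² > 0 for every m. -/

import Mathlib

open Finset

/-- If `γ*` minimizes `‖∑ m, γ_m g_m‖²` over the probability simplex and
`d := ∑ m, γ*_m g_m ≠ 0`, then `−d` is a common descent direction:
`⟪g_m, d⟫ ≥ ‖d‖² > 0` for every `m`. -/
theorem stmt_4 (n p : ℕ) (g : Fin n → EuclideanSpace ℝ (Fin p))
    (γstar : Fin n → ℝ) (hγ : ∀ m, 0 ≤ γstar m) (hsum : ∑ m, γstar m = 1)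
    (hmin : ∀ γ : Fin n → ℝ, (∀ m, 0 ≤ γ m) → (∑ m, γ m = 1) →
      ‖∑ m, γstar m • g m‖ ^ 2 ≤ ‖∑ m, γ m • g m‖ ^ 2)
    (d : EuclideanSpace ℝ (Fin p)) (hd : d = ∑ m, γstar m • g m) (hdne : d ≠ 0) :
    (∀ m, ‖d‖ ^ 2 ≤ inner ℝ (g m) d) ∧ (0 : ℝ) < ‖d‖ ^ 2 := by
  have hpos : (0 : ℝ) < ‖d‖ ^ 2 := by
    have : 0 < ‖d‖ := norm_pos_iff.mpr hdne
    positivity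
  refine ⟨fun m => ?_, hpos⟩
  -- key perturbation inequality
  have key : ∀ t : ℝ, 0 < t → t ≤ 1 →
      0 ≤ 2 * (inner ℝ d (g m - d) : ℝ) + t * ‖g m - d‖ ^ 2 := by
    intro t ht0 ht1
    set γ : Fin n → ℝ := fun m' => (1 - t) * γstar m' + (if m' = m then t else 0)
    have hγ' : ∀ m', 0 ≤ γ m' := by
      intro m'
      have := hγ m'
      simp only [γ]
      split <;> nlinarith
    have hsum' : ∑ m', γ m' = 1 := by
      simp [γ, Finset.sum_add_distrib, ← Finset.mul_sum, hsum]
    have hvec : ∑ m', γ m' • g m' = d + t • (g m - d) := by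
      simp only [γ, add_smul, Finset.sum_add_distrib, ite_smul, zero_smul,
        Finset.sum_ite_eq', Finset.mem_univ, if_true, mul_smul, ← Finset.smul_sum, ← hd]
      rw [sub_smul, one_smul, smul_sub]
      abel
    have h := hmin γ hγ' hsum'
    rw [hvec, ← hd] at h
    have hexp : ‖d + t • (g m - d)‖ ^ 2
        = ‖d‖ ^ 2 + 2 * (t * inner ℝ d (g m - d)) + t ^ 2 * ‖g m - d‖ ^ 2 := by
      rw [norm_add_sq_real, real_inner_smul_right, norm_smul]
      simp [mul_pow, abs_of_pos ht0]
      try ring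
    rw [hexp] at h
    nlinarith
  have hnn : 0 ≤ (inner ℝ d (g m - d) : ℝ) := by
    by_contra hneg
    push_neg at hneg
    set a : ℝ := inner ℝ d (g m - d)
    set b : ℝ := ‖g m - d‖ ^ 2 with hb
    have hb0 : 0 ≤ b := by positivity
    rcases eq_or_lt_of_le hb0 with hb0' | hb0'
    · have := key 1 one_pos le_rfl
      nlinarith
    · have ht0 : 0 < min 1 (-a / b) := by
        simp only [lt_min_iff]
        constructor
        · norm_num
        · exact div_pos (neg_pos.mpr hneg) hb0'
      have := key (min 1 (-a / b)) ht0 (min_le_left _ _)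
      have htb : min 1 (-a / b) * b ≤ -a := by
        calc min 1 (-a / b) * b ≤ (-a / b) * b := by
              apply mul_le_mul_of_nonneg_right (min_le_right _ _) hb0
          _ = -a := by field_simp
      nlinarith
  have : (inner ℝ d (g m) : ℝ) - ‖d‖ ^ 2 = inner ℝ d (g m - d) := by
    rw [inner_sub_right, real_inner_self_eq_norm_sq]
  rw [real_inner_comm]
  linarith [this ▸ hnn]
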